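/- Let f_0(z,w) = (z^δ, z^γ w^d) with δ ≥ 2, d ≥ 2, γ ≥ 0, γ + d ≥ 2. Let φ(z,w) = (φ₁(z), φ₂(z,w)) be a biholomorphic skew product on an open set U of the form {|z| < r, |w| < r|z|^{l}} (l ≥ 0 rational) that conjugates f_0 to itself and satisfies |φ₁(z)| ~ |z| and |φ₂(z,w)| ~ |w| as (z,w) → 0 in U. Then φ(z,w) = (c₁ z, c₂ w) with c₁^{δ-1} = 1 and c₁^{γ} c₂^{d-1} = 1. -/

import Mathlib

open Filter Set

/-- dichotomy: if q^{e^n} stays in [1/2,3/2] for all large n, then q = 1 -/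
lemma aux_pow_dichotomy (q : ℝ) (hq : 0 ≤ q) (e : ℕ) (he : 2 ≤ e) (N : ℕ)
    (h : ∀ n ≥ N, 1/2 ≤ q ^ e ^ n ∧ q ^ e ^ n ≤ 3/2) : q = 1 := by
  have h2 : Tendsto (fun n : ℕ => e ^ n) atTop atTop :=
    tendsto_pow_atTop_atTop_of_one_lt (r := e) (by omega)
  rcases lt_trichotomy q 1 with hlt | heq | hgt
  · have h1 : Tendsto (fun m : ℕ => q ^ m) atTop (nhds 0) :=
      tendsto_pow_atTop_nhds_zero_of_lt_one hq hlt
    have h3 := (h1.comp h2).eventually_lt_const (by norm_num : (0:ℝ) < 1/2)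
    obtain ⟨n, hlt, hge⟩ := (h3.and (eventually_ge_atTop N)).exists
    have := (h n hge).1
    simp only [Function.comp_apply] at hlt
    linarith
  · exact heq
  · have h1 : Tendsto (fun m : ℕ => q ^ m) atTop atTop :=
      tendsto_pow_atTop_atTop_of_one_lt hgt
    have h3 := (h1.comp h2).eventually_gt_atTop (3/2)
    obtain ⟨n, hlt, hge⟩ := (h3.and (eventually_ge_atTop N)).exists
    have := (h n hge).2
    simp only [Function.comp_apply] at hlt
    linarith

/-- the punctured disc in ℂ is connected -/
lemma aux_connected (r : ℝ) (hr : 0 < r) : IsConnected {z : ℂ | 0 < ‖z‖ ∧ ‖z‖ < r} := by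
  have h1 : IsConnected (Set.Ioo (0:ℝ) 1) := isConnected_Ioo one_pos
  have h2 : IsConnected (Metric.sphere (0:ℂ) r) := by
    apply isConnected_sphere ?_ 0 hr.le
    rw [Complex.rank_real_complex]; norm_num
  have h4 : Continuous (fun p : ℝ × ℂ => (p.1 : ℂ) * p.2) := by continuity
  have h3 := (h1.prod h2).image _ h4.continuousOn
  convert h3 using 1
  ext z
  simp only [Set.mem_image, Set.mem_prod, Set.mem_Ioo, Metric.mem_sphere, dist_zero_right,
    Set.mem_setOf_eq, Prod.exists]
  constructor
  · rintro ⟨hz0, hzr⟩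
    refine ⟨‖z‖/r, ((r/‖z‖ : ℝ) : ℂ) * z, ⟨⟨by positivity, by rw [div_lt_one hr]; exact hzr⟩, ?_⟩, ?_⟩
    · rw [norm_mul, Complex.norm_real, Real.norm_eq_abs, abs_of_pos (by positivity)]
      exact div_mul_cancel₀ r hz0.ne'
    · rw [← mul_assoc, ← Complex.ofReal_mul]
      have h5 : ‖z‖ / r * (r / ‖z‖) = 1 := by
        rw [div_mul_div_comm, mul_comm]
        exact div_self (by positivity)
      rw [h5, Complex.ofReal_one, one_mul]
  · rintro ⟨t, u, ⟨⟨ht0, ht1⟩, hu⟩, rfl⟩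
    rw [norm_mul, Complex.norm_real, Real.norm_eq_abs, abs_of_pos ht0, hu]
    constructor
    · positivity
    · calc t * r < 1 * r := by nlinarith
      _ = r := one_mul r

/-- a holomorphic function of constant modulus on a preconnected open set is constant -/
lemma aux_const {s : Set ℂ} (hs : IsPreconnected s) (ho : IsOpen s) (f : ℂ → ℂ)
    (hd : DifferentiableOn ℂ f s) (hn : ∀ z ∈ s, ‖f z‖ = 1) {z0 : ℂ} (hz0 : z0 ∈ s) :
    ∀ z ∈ s, f z = f z0 := by
  have hmax : IsMaxOn (norm ∘ f) s z0 := by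
    intro z hz
    simp only [Set.mem_setOf_eq, Function.comp_apply, hn z hz, hn z0 hz0, le_refl]
  exact fun z hz => Complex.eqOn_of_isPreconnected_of_isMaxOn_norm hs ho hd hz0 hmax hz

lemma aux_norm_ofReal (x : ℝ) (hx : 0 ≤ x) : ‖(x:ℂ)‖ = x := by
  rw [Complex.norm_real, Real.norm_eq_abs, abs_of_nonneg hx]

/-- let f₀(z,w) = (z^δ, z^γ w^d) with δ ≥ 2, d ≥ 2, γ ≥ 0, γ + d ≥ 2,
and let φ(z,w) = (φ₁(z), φ₂(z,w)) be a biholomorphic skew product on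
U = {|z| < r, |w| < r|z|^l} (l ≥ 0) conjugating f₀ to itself and satisfying
|φ₁(z)| ~ |z| and |φ₂(z,w)| ~ |w| as r → 0. Then φ(z,w) = (c₁z, c₂w) on U with
c₁^{δ-1} = 1 and c₁^γ c₂^{d-1} = 1. -/
theorem stmt15
    (δ d γ : ℕ) (hδ : 2 ≤ δ) (hd : 2 ≤ d) (hγd : 2 ≤ γ + d)
    (l r : ℝ) (hl : 0 ≤ l) (hr : 0 < r)
    (U : Set (ℂ × ℂ)) (hU : U = {p : ℂ × ℂ | ‖p.1‖ < r ∧ ‖p.2‖ < r * ‖p.1‖ ^ l})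
    (φ1 : ℂ → ℂ) (φ2 : ℂ → ℂ → ℂ)
    (hdiff : DifferentiableOn ℂ (fun p : ℂ × ℂ => (φ1 p.1, φ2 p.1 p.2)) U)
    (hinj : Set.InjOn (fun p : ℂ × ℂ => (φ1 p.1, φ2 p.1 p.2)) U)
    (hmapsto : Set.MapsTo (fun p : ℂ × ℂ => (p.1 ^ δ, p.1 ^ γ * p.2 ^ d)) U U)
    (hconj : ∀ p ∈ U, φ1 (p.1 ^ δ) = (φ1 p.1) ^ δ ∧
      φ2 (p.1 ^ δ) (p.1 ^ γ * p.2 ^ d) = (φ1 p.1) ^ γ * (φ2 p.1 p.2) ^ d)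
    (hasymp : ∀ ε > 0, ∃ ρ, 0 < ρ ∧ ρ ≤ r ∧ ∀ p : ℂ × ℂ,
      ‖p.1‖ < ρ → ‖p.2‖ < ρ * ‖p.1‖ ^ l →
      ((1 - ε) * ‖p.1‖ ≤ ‖φ1 p.1‖ ∧ ‖φ1 p.1‖ ≤ (1 + ε) * ‖p.1‖ ∧
       (1 - ε) * ‖p.2‖ ≤ ‖φ2 p.1 p.2‖ ∧ ‖φ2 p.1 p.2‖ ≤ (1 + ε) * ‖p.2‖)) :
    ∃ c1 c2 : ℂ, c1 ^ (δ - 1) = 1 ∧ c1 ^ γ * c2 ^ (d - 1) = 1 ∧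
      ∀ p ∈ U, φ1 p.1 = c1 * p.1 ∧ φ2 p.1 p.2 = c2 * p.2 := by
  have hUm : ∀ p : ℂ × ℂ, p ∈ U ↔ ‖p.1‖ < r ∧ ‖p.2‖ < r * ‖p.1‖ ^ l := fun p => by
    rw [hU]; exact Iff.rfl
  -- r ≤ 1
  have hr1 : r ≤ 1 := by
    by_contra hcon
    push_neg at hcon
    have ht1 : 1 < (1 + r)/2 := by linarith
    have htr : (1 + r)/2 < r := by linarith
    have ht0 : 0 < (1 + r)/2 := by linarith
    have htn : ‖(((1 + r)/2 : ℝ):ℂ)‖ = (1 + r)/2 := aux_norm_ofReal _ ht0.le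
    have hmem : ((((1 + r)/2 : ℝ):ℂ), (0:ℂ)) ∈ U := by
      rw [hUm]
      constructor
      · show ‖(((1 + r)/2 : ℝ):ℂ)‖ < r
        rw [htn]; exact htr
      · simp only [norm_zero]
        have h0 : (0:ℝ) < ‖(((1 + r)/2 : ℝ):ℂ)‖ ^ l :=
          Real.rpow_pos_of_pos (by rw [htn]; exact ht0) l
        positivity
    have h2 := ((hUm _).mp (hmapsto hmem)).1
    simp only [norm_pow, htn] at h2
    have h3 : ((1 + r)/2)^2 ≤ ((1 + r)/2)^δ := pow_le_pow_right₀ ht1.le hδ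
    nlinarith [h2, h3]
  -- the exponent inequality
  have hE : l * δ ≤ γ + l * d := by
    by_contra hcon
    push_neg at hcon
    have he0 : 0 < l * δ - γ - l * d := by linarith
    set e : ℝ := l * δ - γ - l * d with he
    set c : ℝ := (r/2)^d / r with hc
    have hc0 : 0 < c := by positivity
    set s : ℝ := min c 1 with hs
    have hs0 : 0 < s := lt_min hc0 one_pos
    have hs1 : s ≤ 1 := min_le_right _ _
    have hsr0 : 0 < s ^ (1/e) := Real.rpow_pos_of_pos hs0 _
    set t : ℝ := min (r/2) ((s ^ (1/e)) / 2) with htdef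
    have ht0 : 0 < t := lt_min (by linarith) (by linarith)
    have htr : t < r := lt_of_le_of_lt (min_le_left _ _) (by linarith)
    have hte : t ^ e < s := by
      have h1 : t < s ^ (1/e) := lt_of_le_of_lt (min_le_right _ _) (by linarith)
      have h2 : t ^ e < (s ^ (1/e)) ^ e := Real.rpow_lt_rpow ht0.le h1 he0
      rwa [← Real.rpow_mul hs0.le, one_div, inv_mul_cancel₀ he0.ne', Real.rpow_one] at h2
    have htn : ‖((t:ℝ):ℂ)‖ = t := aux_norm_ofReal t ht0.le
    have htl : (0:ℝ) < t ^ l := Real.rpow_pos_of_pos ht0 l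
    have hw0 : (0:ℝ) < r * t ^ l / 2 := by positivity
    have hmem : (((t:ℝ):ℂ), ((r * t ^ l / 2 : ℝ):ℂ)) ∈ U := by
      rw [hUm]
      refine ⟨?_, ?_⟩
      · show ‖((t:ℝ):ℂ)‖ < r
        rw [htn]; exact htr
      · show ‖((r * t ^ l / 2 : ℝ):ℂ)‖ < r * ‖((t:ℝ):ℂ)‖ ^ l
        rw [aux_norm_ofReal _ hw0.le, htn]
        linarith
    have h2 := ((hUm _).mp (hmapsto hmem)).2
    dsimp only at h2
    simp only [norm_mul, norm_pow] at h2
    rw [htn, aux_norm_ofReal _ hw0.le] at h2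
    -- h2 : t^γ * (r * t^l/2)^d < r * (t^δ)^l
    have lhs_eq : t^γ * (r * t^l/2)^d = (r/2)^d * t^((γ:ℝ) + l*d) := by
      rw [mul_div_right_comm, mul_pow, ← Real.rpow_natCast t γ,
        ← Real.rpow_natCast (t^l) d, ← Real.rpow_mul ht0.le, Real.rpow_add ht0]
      ring
    have rhs_eq : r * (t^δ)^l = r * t^e * t^((γ:ℝ) + l*d) := by
      rw [← Real.rpow_natCast t δ, ← Real.rpow_mul ht0.le, mul_assoc, ← Real.rpow_add ht0]
      congr 1
      rw [he]
      push_cast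
      ring
    rw [lhs_eq, rhs_eq] at h2
    have hpos : 0 < t ^ ((γ:ℝ) + l*d) := Real.rpow_pos_of_pos ht0 _
    have key2 : (r/2)^d < r * t^e := lt_of_mul_lt_mul_right h2 hpos.le
    have h4 : t^e < c := lt_of_lt_of_le hte (min_le_left _ _)
    have h5 : r * t^e < r * c := mul_lt_mul_of_pos_left h4 hr
    have h6 : r * c = (r/2)^d := by
      rw [hc, mul_div_assoc']
      field_simp
    linarith
  -- orbit basics for (z, 0)
  have hZnr : ∀ z : ℂ, z ≠ 0 → ‖z‖ < r → ∀ n : ℕ, ‖z ^ δ ^ n‖ < r := by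
    intro z hz hzr n
    rw [norm_pow]
    have h2 : ‖z‖ ^ δ ^ n ≤ ‖z‖ ^ 1 :=
      pow_le_pow_of_le_one (norm_nonneg z) (le_trans hzr.le hr1)
        (Nat.one_le_pow n δ (by omega))
    rw [pow_one] at h2
    linarith
  have hZmem : ∀ z : ℂ, z ≠ 0 → ‖z‖ < r → ∀ n : ℕ, (z ^ δ ^ n, (0:ℂ)) ∈ U := by
    intro z hz hzr n
    rw [hUm]
    refine ⟨hZnr z hz hzr n, ?_⟩
    show ‖(0:ℂ)‖ < r * ‖z ^ δ ^ n‖ ^ l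
    rw [norm_zero]
    have h3 : 0 < ‖z ^ δ ^ n‖ := norm_pos_iff.mpr (pow_ne_zero _ hz)
    have := Real.rpow_pos_of_pos h3 l
    positivity
  have hZsmall : ∀ z : ℂ, z ≠ 0 → ‖z‖ < r → ∀ ρ : ℝ, 0 < ρ →
      ∀ᶠ n : ℕ in atTop, ‖z ^ δ ^ n‖ < ρ := by
    intro z hz hzr ρ hρ0
    have hz1 : ‖z‖ < 1 := lt_of_lt_of_le hzr hr1
    have h1 : Tendsto (fun n : ℕ => ‖z‖ ^ n) atTop (nhds 0) :=
      tendsto_pow_atTop_nhds_zero_of_lt_one (norm_nonneg z) hz1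
    have h2 : Tendsto (fun n : ℕ => ‖z ^ δ ^ n‖) atTop (nhds 0) := by
      apply squeeze_zero (fun n => norm_nonneg _) (fun n => ?_) h1
      rw [norm_pow]
      exact pow_le_pow_of_le_one (norm_nonneg z) hz1.le
        (Nat.le_of_lt (Nat.lt_pow_self (n := n) (a := δ) (by omega)))
    exact h2.eventually_lt_const hρ0
  -- iteration of φ1
  have hiter : ∀ z : ℂ, z ≠ 0 → ‖z‖ < r → ∀ n : ℕ, φ1 (z ^ δ ^ n) = (φ1 z) ^ δ ^ n := by
    intro z hz hzr n
    induction n with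
    | zero => simp
    | succ n ih =>
      have h1 := (hconj _ (hZmem z hz hzr n)).1
      dsimp only at h1
      rw [← pow_mul, ← pow_succ] at h1
      rw [h1, ih, ← pow_mul, ← pow_succ]
  -- ‖φ1 z‖ = ‖z‖
  have hA : ∀ z : ℂ, z ≠ 0 → ‖z‖ < r → ‖φ1 z‖ = ‖z‖ := by
    intro z hz hzr
    have hz0 : 0 < ‖z‖ := norm_pos_iff.mpr hz
    obtain ⟨ρ, hρ0, hρr, hbound⟩ := hasymp (1/2) (by norm_num)
    obtain ⟨N, hN⟩ := eventually_atTop.mp (hZsmall z hz hzr ρ hρ0)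
    have hq : ∀ n ≥ N, 1/2 ≤ (‖φ1 z‖ / ‖z‖) ^ δ ^ n ∧ (‖φ1 z‖ / ‖z‖) ^ δ ^ n ≤ 3/2 := by
      intro n hn
      have hzn : 0 < ‖z ^ δ ^ n‖ := norm_pos_iff.mpr (pow_ne_zero _ hz)
      have hb := hbound (z ^ δ ^ n, 0) (hN n hn) (by
        show ‖(0:ℂ)‖ < ρ * ‖z ^ δ ^ n‖ ^ l
        rw [norm_zero]
        have := Real.rpow_pos_of_pos hzn l
        positivity)
      obtain ⟨hb1, hb2, -, -⟩ := hb
      dsimp only at hb1 hb2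
      rw [hiter z hz hzr n, norm_pow, norm_pow] at hb1 hb2
      have hzp : 0 < ‖z‖ ^ δ ^ n := by positivity
      rw [div_pow]
      constructor
      · rw [le_div_iff₀ hzp]; linarith
      · rw [div_le_iff₀ hzp]; linarith
    have h1 := aux_pow_dichotomy _ (by positivity) δ hδ N hq
    exact (div_eq_one_iff_eq hz0.ne').mp h1
  -- φ2 z 0 = 0
  have hA20 : ∀ z : ℂ, z ≠ 0 → ‖z‖ < r → φ2 z 0 = 0 := by
    intro z hz hzr
    obtain ⟨ρ, hρ0, hρr, hbound⟩ := hasymp 1 one_pos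
    obtain ⟨N, hN⟩ := eventually_atTop.mp (hZsmall z hz hzr ρ hρ0)
    -- backward zero propagation
    have hzero : ∀ n : ℕ, φ2 (z ^ δ ^ n) 0 = 0 → φ2 z 0 = 0 := by
      intro n
      induction n with
      | zero => intro h; simpa using h
      | succ n ih =>
        intro h
        have h1 := (hconj _ (hZmem z hz hzr n)).2
        dsimp only at h1
        rw [← pow_mul, ← pow_succ, zero_pow (by omega : d ≠ 0), mul_zero] at h1
        rw [h1] at h
        rcases mul_eq_zero.mp h with h2 | h2
        · exfalso
          have hφ : φ1 (z ^ δ ^ n) ≠ 0 := by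
            have h3 := hA (z ^ δ ^ n) (pow_ne_zero _ hz) (hZnr z hz hzr n)
            intro hcon
            rw [hcon, norm_zero] at h3
            exact (norm_pos_iff.mpr (pow_ne_zero _ hz)).ne h3
          exact hφ (pow_eq_zero_iff'.mp h2).1
        · exact ih ((pow_eq_zero_iff (by omega : d ≠ 0)).mp h2)
    apply hzero N
    have hb := hbound (z ^ δ ^ N, 0) (hN N le_rfl) (by
      show ‖(0:ℂ)‖ < ρ * ‖z ^ δ ^ N‖ ^ l
      rw [norm_zero]
      have h3 : 0 < ‖z ^ δ ^ N‖ := norm_pos_iff.mpr (pow_ne_zero _ hz)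
      have := Real.rpow_pos_of_pos h3 l
      positivity)
    obtain ⟨-, -, -, hb4⟩ := hb
    dsimp only at hb4
    rw [norm_zero, mul_zero] at hb4
    exact norm_le_zero_iff.mp hb4
  -- ‖φ2 z w‖ = ‖w‖
  have hA2 : ∀ z w : ℂ, (z, w) ∈ U → z ≠ 0 → ‖φ2 z w‖ = ‖w‖ := by
    intro z w hzw hz
    obtain ⟨hzr, hwr⟩ := (hUm _).mp hzw
    dsimp only at hzr hwr
    rcases eq_or_ne w 0 with rfl | hw
    · rw [hA20 z hz hzr, norm_zero]
    have hz0 : 0 < ‖z‖ := norm_pos_iff.mpr hz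
    -- the orbit in the second coordinate
    let W : ℕ → ℂ := fun n => Nat.rec w (fun k Wk => (z ^ δ ^ k) ^ γ * Wk ^ d) n
    have hW0 : W 0 = w := rfl
    have hWs : ∀ n, W (n + 1) = (z ^ δ ^ n) ^ γ * (W n) ^ d := fun n => rfl
    have hZs : ∀ n : ℕ, z ^ δ ^ (n + 1) = (z ^ δ ^ n) ^ δ := fun n => by
      rw [← pow_mul, ← pow_succ]
    have hZne : ∀ n : ℕ, z ^ δ ^ n ≠ 0 := fun n => pow_ne_zero _ hz
    have hZn0 : ∀ n : ℕ, (0:ℝ) < ‖z ^ δ ^ n‖ := fun n => norm_pos_iff.mpr (hZne n)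
    have hWne : ∀ n, W n ≠ 0 := by
      intro n
      induction n with
      | zero => exact hw
      | succ n ih =>
        rw [hWs]
        exact mul_ne_zero (pow_ne_zero _ (hZne n)) (pow_ne_zero _ ih)
    have hmem : ∀ n, (z ^ δ ^ n, W n) ∈ U := by
      intro n
      induction n with
      | zero =>
        show (z ^ δ ^ 0, w) ∈ U
        rw [pow_zero, pow_one]
        exact hzw
      | succ n ih =>
        have h1 := hmapsto ih
        dsimp only at h1
        rwa [← hZs n, ← hWs n] at h1
    have hZr : ∀ n, ‖z ^ δ ^ n‖ < r := fun n => hZnr z hz hzr n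
    have hZ1 : ∀ n, ‖z ^ δ ^ n‖ ≤ 1 := fun n => (lt_of_lt_of_le (hZr n) hr1).le
    -- norm recurrence for φ2 along the orbit
    have hrec : ∀ n, ‖φ2 (z ^ δ ^ (n+1)) (W (n+1))‖
        = ‖z ^ δ ^ n‖ ^ γ * ‖φ2 (z ^ δ ^ n) (W n)‖ ^ d := by
      intro n
      have h1 := (hconj _ (hmem n)).2
      dsimp only at h1
      rw [← hZs n, ← hWs n] at h1
      rw [h1, norm_mul, norm_pow, norm_pow, hA _ (hZne n) (hZr n)]
    -- ratio recurrence
    have hq : ∀ n, ‖φ2 (z ^ δ ^ n) (W n)‖ / ‖W n‖ = (‖φ2 z w‖ / ‖w‖) ^ d ^ n := by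
      intro n
      induction n with
      | zero =>
        show ‖φ2 (z ^ δ ^ 0) w‖ / ‖w‖ = _
        rw [pow_zero, pow_one, pow_zero, pow_one]
      | succ n ih =>
        have hx : (0:ℝ) < ‖z ^ δ ^ n‖ ^ γ := pow_pos (hZn0 n) _
        rw [hrec n, hWs n, norm_mul, norm_pow (z ^ δ ^ n) γ, norm_pow (W n) d,
          mul_div_mul_left _ _ hx.ne', ← div_pow, ih, ← pow_mul, ← pow_succ]
    -- smallness of c n = ‖W n‖ / ‖z^δ^n‖^l
    have hxl : ∀ n, (0:ℝ) < ‖z ^ δ ^ n‖ ^ l := fun n => Real.rpow_pos_of_pos (hZn0 n) l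
    have hcn : ∀ n, ‖W n‖ / ‖z ^ δ ^ n‖ ^ l < r := by
      intro n
      have h1 := ((hUm _).mp (hmem n)).2
      dsimp only at h1
      rw [div_lt_iff₀ (hxl n)]
      linarith
    have hkey : ∀ n, ‖W (n+1)‖ / ‖z ^ δ ^ (n+1)‖ ^ l ≤ (‖W n‖ / ‖z ^ δ ^ n‖ ^ l) ^ d := by
      intro n
      have hx0 : (0:ℝ) < ‖z ^ δ ^ n‖ := hZn0 n
      have hx1 : ‖z ^ δ ^ n‖ ≤ 1 := hZ1 n
      have e1 : ‖z ^ δ ^ (n+1)‖ ^ l = ‖z ^ δ ^ n‖ ^ ((δ:ℝ) * l) := by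
        rw [hZs n, norm_pow, ← Real.rpow_natCast ‖z ^ δ ^ n‖ δ, ← Real.rpow_mul hx0.le]
      have e2 : ‖W (n+1)‖ = ‖z ^ δ ^ n‖ ^ (γ:ℝ) * ‖W n‖ ^ d := by
        rw [hWs n, norm_mul, norm_pow (z ^ δ ^ n) γ, norm_pow (W n) d, Real.rpow_natCast]
      have e3 : (‖W n‖ / ‖z ^ δ ^ n‖ ^ l) ^ d = ‖W n‖ ^ d / ‖z ^ δ ^ n‖ ^ (l * (d:ℝ)) := by
        rw [div_pow, ← Real.rpow_natCast (‖z ^ δ ^ n‖ ^ l) d, ← Real.rpow_mul hx0.le]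
      rw [e1, e2, e3, div_le_div_iff₀ (Real.rpow_pos_of_pos hx0 _) (Real.rpow_pos_of_pos hx0 _)]
      have h3 : ‖z ^ δ ^ n‖ ^ (γ:ℝ) * ‖z ^ δ ^ n‖ ^ (l*(d:ℝ)) = ‖z ^ δ ^ n‖ ^ ((γ:ℝ) + l*d) :=
        (Real.rpow_add hx0 _ _).symm
      calc ‖z ^ δ ^ n‖ ^ (γ:ℝ) * ‖W n‖ ^ d * ‖z ^ δ ^ n‖ ^ (l * (d:ℝ))
          = ‖W n‖ ^ d * (‖z ^ δ ^ n‖ ^ (γ:ℝ) * ‖z ^ δ ^ n‖ ^ (l*(d:ℝ))) := by ring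
        _ = ‖W n‖ ^ d * ‖z ^ δ ^ n‖ ^ ((γ:ℝ) + l*d) := by rw [h3]
        _ ≤ ‖W n‖ ^ d * ‖z ^ δ ^ n‖ ^ ((δ:ℝ) * l) := by
            apply mul_le_mul_of_nonneg_left _ (by positivity)
            exact Real.rpow_le_rpow_of_exponent_ge hx0 hx1 (by linarith [hE])
    have hge : ∀ n, (0:ℝ) ≤ ‖W n‖ / ‖z ^ δ ^ n‖ ^ l := fun n =>
      div_nonneg (norm_nonneg _) (hxl n).le
    have hc00 : ‖W 0‖ / ‖z ^ δ ^ 0‖ ^ l < 1 := lt_of_lt_of_le (hcn 0) hr1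
    have hcb : ∀ n, ‖W n‖ / ‖z ^ δ ^ n‖ ^ l ≤ (‖W 0‖ / ‖z ^ δ ^ 0‖ ^ l) ^ (n+1) ∧
        ‖W n‖ / ‖z ^ δ ^ n‖ ^ l ≤ ‖W 0‖ / ‖z ^ δ ^ 0‖ ^ l := by
      intro n
      induction n with
      | zero => exact ⟨by rw [pow_one], le_refl _⟩
      | succ n ih =>
        have h1 := hkey n
        have h2 : (‖W n‖ / ‖z ^ δ ^ n‖ ^ l) ^ d ≤ (‖W n‖ / ‖z ^ δ ^ n‖ ^ l) ^ 2 :=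
          pow_le_pow_of_le_one (hge n) (le_trans ih.2 hc00.le) hd
        have h3 : (‖W n‖ / ‖z ^ δ ^ n‖ ^ l) ^ 2
            ≤ (‖W 0‖ / ‖z ^ δ ^ 0‖ ^ l) ^ (n+1) * (‖W 0‖ / ‖z ^ δ ^ 0‖ ^ l) := by
          rw [pow_two]
          exact mul_le_mul ih.1 ih.2 (hge n) (by positivity)
        constructor
        · rw [pow_succ]
          exact le_trans h1 (le_trans h2 h3)
        · have h4 : (‖W 0‖ / ‖z ^ δ ^ 0‖ ^ l) ^ (n+1+1) ≤ ‖W 0‖ / ‖z ^ δ ^ 0‖ ^ l :=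
            pow_le_of_le_one (hge 0) hc00.le (by omega)
          calc ‖W (n+1)‖ / ‖z ^ δ ^ (n+1)‖ ^ l ≤ _ := le_trans h1 (le_trans h2 h3)
            _ = (‖W 0‖ / ‖z ^ δ ^ 0‖ ^ l) ^ (n+1+1) := by ring
            _ ≤ _ := h4
    -- apply the asymptotics
    obtain ⟨ρ, hρ0, hρr, hbound⟩ := hasymp (1/2) (by norm_num)
    have hev1 := hZsmall z hz hzr ρ hρ0
    have hev2 : ∀ᶠ n : ℕ in atTop, ‖W n‖ / ‖z ^ δ ^ n‖ ^ l < ρ := by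
      have htend : Tendsto (fun n : ℕ => (‖W 0‖ / ‖z ^ δ ^ 0‖ ^ l) ^ (n+1)) atTop (nhds 0) :=
        (tendsto_pow_atTop_nhds_zero_of_lt_one (hge 0) hc00).comp (tendsto_add_atTop_nat 1)
      have h5 := htend.eventually_lt_const hρ0
      filter_upwards [h5] with n hn
      exact lt_of_le_of_lt (hcb n).1 hn
    obtain ⟨N, hN⟩ := eventually_atTop.mp (hev1.and hev2)
    have hqb : ∀ n ≥ N, 1/2 ≤ (‖φ2 z w‖ / ‖w‖) ^ d ^ n ∧ (‖φ2 z w‖ / ‖w‖) ^ d ^ n ≤ 3/2 := by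
      intro n hn
      obtain ⟨hs1, hs2⟩ := hN n hn
      have hb := hbound (z ^ δ ^ n, W n) hs1 (by
        show ‖W n‖ < ρ * ‖z ^ δ ^ n‖ ^ l
        rw [div_lt_iff₀ (hxl n)] at hs2
        linarith)
      obtain ⟨-, -, hb3, hb4⟩ := hb
      dsimp only at hb3 hb4
      have hWp : 0 < ‖W n‖ := norm_pos_iff.mpr (hWne n)
      rw [← hq n]
      constructor
      · rw [le_div_iff₀ hWp]; linarith
      · rw [div_le_iff₀ hWp]; linarith
    have h1 := aux_pow_dichotomy _ (by positivity) d hd N hqb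
    exact (div_eq_one_iff_eq (norm_pos_iff.mpr hw).ne').mp h1
  -- U is open
  have hrpowc : Continuous (fun x : ℝ => x ^ l) := by
    rw [continuous_iff_continuousAt]
    intro x
    exact Real.continuousAt_rpow_const x l (Or.inr hl)
  have hUopen : IsOpen U := by
    rw [hU]
    apply IsOpen.and
    · exact isOpen_lt continuous_fst.norm continuous_const
    · exact isOpen_lt continuous_snd.norm
        (continuous_const.mul (hrpowc.comp continuous_fst.norm))
  -- slices are differentiable
  have hFd : ∀ z w : ℂ, (z, w) ∈ U →
      DifferentiableAt ℂ (fun p : ℂ × ℂ => (φ1 p.1, φ2 p.1 p.2)) (z, w) :=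
    fun z w h => hdiff.differentiableAt (hUopen.mem_nhds h)
  have hslice1 : ∀ z w : ℂ, (z, w) ∈ U → DifferentiableAt ℂ φ1 z := by
    intro z w h
    have h1 : DifferentiableAt ℂ (fun z' : ℂ => (z', w)) z :=
      differentiableAt_id.prodMk (differentiableAt_const w)
    exact ((hFd z w h).comp z h1).fst
  have hslice2 : ∀ z w : ℂ, (z, w) ∈ U → DifferentiableAt ℂ (fun w' => φ2 z w') w := by
    intro z w h
    have h1 : DifferentiableAt ℂ (fun w' : ℂ => (z, w')) w :=
      (differentiableAt_const z).prodMk differentiableAt_id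
    exact ((hFd z w h).comp w h1).snd
  have hslice3 : ∀ z w : ℂ, (z, w) ∈ U → DifferentiableAt ℂ (fun z' => φ2 z' w) z := by
    intro z w h
    have h1 : DifferentiableAt ℂ (fun z' : ℂ => (z', w)) z :=
      differentiableAt_id.prodMk (differentiableAt_const w)
    exact ((hFd z w h).comp z h1).snd
  -- the punctured disc A
  have hAopen : IsOpen {ζ : ℂ | 0 < ‖ζ‖ ∧ ‖ζ‖ < r} :=
    IsOpen.and (isOpen_lt continuous_const continuous_norm)
      (isOpen_lt continuous_norm continuous_const)
  have hAconn := aux_connected r hr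
  have hz0n : ‖((r/2 : ℝ):ℂ)‖ = r/2 := aux_norm_ofReal _ (by positivity)
  have hz0A : ((r/2 : ℝ):ℂ) ∈ {ζ : ℂ | 0 < ‖ζ‖ ∧ ‖ζ‖ < r} := by
    refine ⟨by rw [hz0n]; positivity, by rw [hz0n]; linarith⟩
  have hmemA : ∀ ζ : ℂ, 0 < ‖ζ‖ → ‖ζ‖ < r → (ζ, (0:ℂ)) ∈ U := by
    intro ζ h1 h2
    rw [hUm]
    refine ⟨h2, ?_⟩
    show ‖(0:ℂ)‖ < r * ‖ζ‖ ^ l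
    rw [norm_zero]
    have := Real.rpow_pos_of_pos h1 l
    positivity
  -- φ1 is linear
  have hgdiff : DifferentiableOn ℂ (fun ζ => φ1 ζ / ζ) {ζ : ℂ | 0 < ‖ζ‖ ∧ ‖ζ‖ < r} := by
    intro ζ hζ
    exact ((hslice1 ζ 0 (hmemA ζ hζ.1 hζ.2)).div differentiableAt_id
      (norm_pos_iff.mp hζ.1)).differentiableWithinAt
  have hgnorm : ∀ ζ ∈ {ζ : ℂ | 0 < ‖ζ‖ ∧ ‖ζ‖ < r}, ‖φ1 ζ / ζ‖ = 1 := by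
    intro ζ hζ
    rw [norm_div, hA ζ (norm_pos_iff.mp hζ.1) hζ.2, div_self hζ.1.ne']
  have hφ1const := aux_const hAconn.isPreconnected hAopen _ hgdiff hgnorm hz0A
  set c1 : ℂ := φ1 ((r/2:ℝ):ℂ) / ((r/2:ℝ):ℂ) with hc1def
  have hφ1c : ∀ ζ : ℂ, 0 < ‖ζ‖ → ‖ζ‖ < r → φ1 ζ = c1 * ζ := by
    intro ζ h1 h2
    have h3 := hφ1const ζ ⟨h1, h2⟩
    have hζ0 : ζ ≠ 0 := norm_pos_iff.mp h1
    rw [← h3]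
    field_simp
  have hc1n : ‖c1‖ = 1 := hgnorm _ hz0A
  have hc1ne : c1 ≠ 0 := by
    intro h; rw [h, norm_zero] at hc1n; norm_num at hc1n
  -- φ2 slice constancy in w
  have hφ2const : ∀ ζ : ℂ, 0 < ‖ζ‖ → ‖ζ‖ < r → ∀ w1 w2 : ℂ, w1 ≠ 0 → w2 ≠ 0 →
      (ζ, w1) ∈ U → (ζ, w2) ∈ U → φ2 ζ w1 / w1 = φ2 ζ w2 / w2 := by
    intro ζ hζ0 hζr w1 w2 hw1 hw2 hm1 hm2
    have hζne : ζ ≠ 0 := norm_pos_iff.mp hζ0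
    have hR : 0 < r * ‖ζ‖ ^ l := by
      have := Real.rpow_pos_of_pos hζ0 l
      positivity
    have hBconn := aux_connected (r * ‖ζ‖ ^ l) hR
    have hBopen : IsOpen {w : ℂ | 0 < ‖w‖ ∧ ‖w‖ < r * ‖ζ‖ ^ l} :=
      IsOpen.and (isOpen_lt continuous_const continuous_norm)
        (isOpen_lt continuous_norm continuous_const)
    have hgd : DifferentiableOn ℂ (fun w => φ2 ζ w / w) {w : ℂ | 0 < ‖w‖ ∧ ‖w‖ < r * ‖ζ‖ ^ l} := by
      intro w hw
      have hm : (ζ, w) ∈ U := (hUm _).mpr ⟨hζr, hw.2⟩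
      exact ((hslice2 ζ w hm).div differentiableAt_id (norm_pos_iff.mp hw.1)).differentiableWithinAt
    have hgn : ∀ w ∈ {w : ℂ | 0 < ‖w‖ ∧ ‖w‖ < r * ‖ζ‖ ^ l}, ‖φ2 ζ w / w‖ = 1 := by
      intro w hw
      have hm : (ζ, w) ∈ U := (hUm _).mpr ⟨hζr, hw.2⟩
      rw [norm_div, hA2 ζ w hm hζne, div_self hw.1.ne']
    have hw1B : w1 ∈ {w : ℂ | 0 < ‖w‖ ∧ ‖w‖ < r * ‖ζ‖ ^ l} :=
      ⟨norm_pos_iff.mpr hw1, ((hUm _).mp hm1).2⟩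
    have hw2B : w2 ∈ {w : ℂ | 0 < ‖w‖ ∧ ‖w‖ < r * ‖ζ‖ ^ l} :=
      ⟨norm_pos_iff.mpr hw2, ((hUm _).mp hm2).2⟩
    have e1 := aux_const hBconn.isPreconnected hBopen _ hgd hgn hw2B w1 hw1B
    exact e1
  -- the canonical slope function
  set Cf : ℂ → ℂ := fun ζ => φ2 ζ ((r * ‖ζ‖ ^ l / 2 : ℝ):ℂ) / ((r * ‖ζ‖ ^ l / 2 : ℝ):ℂ) with hCfdef
  have hwmid : ∀ ζ : ℂ, 0 < ‖ζ‖ → ‖ζ‖ < r →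
      ((r * ‖ζ‖ ^ l / 2 : ℝ):ℂ) ≠ 0 ∧ (ζ, ((r * ‖ζ‖ ^ l / 2 : ℝ):ℂ)) ∈ U := by
    intro ζ h1 h2
    have hRp : 0 < r * ‖ζ‖ ^ l := by
      have := Real.rpow_pos_of_pos h1 l
      positivity
    have hmn : ‖((r * ‖ζ‖ ^ l / 2 : ℝ):ℂ)‖ = r * ‖ζ‖ ^ l / 2 := aux_norm_ofReal _ (by positivity)
    constructor
    · intro h
      rw [h, norm_zero] at hmn
      linarith
    · rw [hUm]
      refine ⟨h2, ?_⟩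
      show ‖((r * ‖ζ‖ ^ l / 2 : ℝ):ℂ)‖ < r * ‖ζ‖ ^ l
      rw [hmn]
      linarith
  have hCval : ∀ ζ : ℂ, 0 < ‖ζ‖ → ‖ζ‖ < r → ∀ w : ℂ, w ≠ 0 → (ζ, w) ∈ U →
      φ2 ζ w / w = Cf ζ := by
    intro ζ h1 h2 w hw hm
    obtain ⟨hm1, hm2⟩ := hwmid ζ h1 h2
    exact hφ2const ζ h1 h2 w _ hw hm1 hm hm2
  have hCnorm : ∀ ζ ∈ {ζ : ℂ | 0 < ‖ζ‖ ∧ ‖ζ‖ < r}, ‖Cf ζ‖ = 1 := by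
    intro ζ hζ
    obtain ⟨hm1, hm2⟩ := hwmid ζ hζ.1 hζ.2
    have h3 := hCval ζ hζ.1 hζ.2 _ hm1 hm2
    rw [← h3, norm_div, hA2 ζ _ hm2 (norm_pos_iff.mp hζ.1),
      div_self (norm_pos_iff.mpr hm1).ne']
  have hCdiff : DifferentiableOn ℂ Cf {ζ : ℂ | 0 < ‖ζ‖ ∧ ‖ζ‖ < r} := by
    intro ζ0 hζ0
    apply DifferentiableAt.differentiableWithinAt
    obtain ⟨hm1, hm2⟩ := hwmid ζ0 hζ0.1 hζ0.2
    have hdAt : DifferentiableAt ℂ (fun ζ => φ2 ζ ((r * ‖ζ0‖ ^ l / 2 : ℝ):ℂ)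
        / ((r * ‖ζ0‖ ^ l / 2 : ℝ):ℂ)) ζ0 :=
      (hslice3 ζ0 _ hm2).div_const _
    apply hdAt.congr_of_eventuallyEq
    have e1 : ∀ᶠ ζ in nhds ζ0, ζ ∈ {ζ : ℂ | 0 < ‖ζ‖ ∧ ‖ζ‖ < r} := hAopen.mem_nhds hζ0
    have e2 : ContinuousAt (fun ζ : ℂ => r * ‖ζ‖ ^ l) ζ0 :=
      (continuous_const.mul (hrpowc.comp continuous_norm)).continuousAt
    have hlt : ‖((r * ‖ζ0‖ ^ l / 2 : ℝ):ℂ)‖ < r * ‖ζ0‖ ^ l := ((hUm _).mp hm2).2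
    have e3 : ∀ᶠ ζ in nhds ζ0, ‖((r * ‖ζ0‖ ^ l / 2 : ℝ):ℂ)‖ < r * ‖ζ‖ ^ l :=
      e2.eventually (eventually_gt_nhds hlt)
    filter_upwards [e1, e3] with ζ hζ hζ3
    have hmζ : (ζ, ((r * ‖ζ0‖ ^ l / 2 : ℝ):ℂ)) ∈ U := (hUm _).mpr ⟨hζ.2, hζ3⟩
    exact (hCval ζ hζ.1 hζ.2 _ hm1 hmζ).symm
  have hCconst := aux_const hAconn.isPreconnected hAopen Cf hCdiff hCnorm hz0A
  set c2 : ℂ := Cf ((r/2:ℝ):ℂ) with hc2def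
  have hc2n : ‖c2‖ = 1 := hCnorm _ hz0A
  have hc2ne : c2 ≠ 0 := by
    intro h; rw [h, norm_zero] at hc2n; norm_num at hc2n
  have hφ2c : ∀ ζ w : ℂ, (ζ, w) ∈ U → ζ ≠ 0 → φ2 ζ w = c2 * w := by
    intro ζ w hm hζ
    have h1 : 0 < ‖ζ‖ := norm_pos_iff.mpr hζ
    have h2 : ‖ζ‖ < r := ((hUm _).mp hm).1
    rcases eq_or_ne w 0 with rfl | hw
    · rw [hA20 ζ hζ h2, mul_zero]
    · have h3 := (hCval ζ h1 h2 w hw hm).trans (hCconst ζ ⟨h1, h2⟩)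
      exact (div_eq_iff hw).mp h3
  -- constants relations
  have hz0ne : ((r/2:ℝ):ℂ) ≠ 0 := norm_pos_iff.mp (by rw [hz0n]; positivity)
  obtain ⟨hw0ne, hp0⟩ := hwmid ((r/2:ℝ):ℂ) hz0A.1 hz0A.2
  have hc1eq : c1 ^ (δ - 1) = 1 := by
    have h1 := (hconj (((r/2:ℝ):ℂ), (0:ℂ)) (hmemA _ hz0A.1 hz0A.2)).1
    dsimp only at h1
    have hz0δ1 : 0 < ‖((r/2:ℝ):ℂ) ^ δ‖ := norm_pos_iff.mpr (pow_ne_zero _ hz0ne)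
    have hz0δ2 : ‖((r/2:ℝ):ℂ) ^ δ‖ < r := by
      rw [norm_pow, hz0n]
      have h2 : (r/2) ^ δ ≤ (r/2) ^ 1 :=
        pow_le_pow_of_le_one (by positivity) (by linarith) (by omega)
      rw [pow_one] at h2
      linarith
    rw [hφ1c _ hz0δ1 hz0δ2, hφ1c _ hz0A.1 hz0A.2, mul_pow] at h1
    have h2 : c1 = c1 ^ δ := mul_right_cancel₀ (pow_ne_zero _ hz0ne) h1
    have h3 : c1 ^ δ = c1 ^ (δ - 1) * c1 := by
      rw [← pow_succ]
      congr 1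
      omega
    have h4 : 1 * c1 = c1 ^ (δ - 1) * c1 := by rw [one_mul, ← h3]; exact h2
    exact (mul_right_cancel₀ hc1ne h4).symm
  have hc2eq : c1 ^ γ * c2 ^ (d - 1) = 1 := by
    have h1 := (hconj (((r/2:ℝ):ℂ), ((r * ‖((r/2:ℝ):ℂ)‖ ^ l / 2 : ℝ):ℂ)) hp0).2
    dsimp only at h1
    have himg := hmapsto hp0
    dsimp only at himg
    have hz0δne : ((r/2:ℝ):ℂ) ^ δ ≠ 0 := pow_ne_zero _ hz0ne
    rw [hφ2c _ _ himg hz0δne, hφ2c _ _ hp0 hz0ne, hφ1c _ hz0A.1 hz0A.2, mul_pow, mul_pow] at h1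
    have hcan : ((r/2:ℝ):ℂ) ^ γ * ((r * ‖((r/2:ℝ):ℂ)‖ ^ l / 2 : ℝ):ℂ) ^ d ≠ 0 :=
      mul_ne_zero (pow_ne_zero _ hz0ne) (pow_ne_zero _ hw0ne)
    have h2 : c2 = c1 ^ γ * c2 ^ d := by
      apply mul_right_cancel₀ hcan
      rw [h1]
      ring
    have h3 : c2 ^ d = c2 ^ (d - 1) * c2 := by
      rw [← pow_succ]
      congr 1
      omega
    have h4 : 1 * c2 = (c1 ^ γ * c2 ^ (d - 1)) * c2 := by
      rw [one_mul, mul_assoc, ← h3]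
      exact h2
    exact (mul_right_cancel₀ hc2ne h4).symm
  refine ⟨c1, c2, hc1eq, hc2eq, ?_⟩
  intro p hp
  obtain ⟨hp1, hp2⟩ := (hUm p).mp hp
  rcases eq_or_ne p.1 0 with h0 | h0
  · -- p.1 = 0, only possible when l = 0
    rcases eq_or_lt_of_le hl with hl0 | hl0
    · -- l = 0
      have hφ10 : φ1 0 = 0 := by
        obtain ⟨ρ, hρ0, hρr, hbound⟩ := hasymp 1 one_pos
        have hb := hbound (0, 0) (by simpa using hρ0) (by
          show ‖(0:ℂ)‖ < ρ * ‖(0:ℂ)‖ ^ l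
          rw [norm_zero, ← hl0, Real.rpow_zero, mul_one]
          exact hρ0)
        obtain ⟨-, hb2, -, -⟩ := hb
        dsimp only at hb2
        rw [norm_zero, mul_zero] at hb2
        exact norm_eq_zero.mp (le_antisymm hb2 (norm_nonneg _))
      have hφ20 : φ2 0 p.2 = c2 * p.2 := by
        have hwr2 : ‖p.2‖ < r := by
          rw [h0, norm_zero, ← hl0, Real.rpow_zero, mul_one] at hp2
          exact hp2
        have hm0 : ((0:ℂ), p.2) ∈ U := (hUm _).mpr ⟨by simpa using hr,
          by rw [norm_zero, ← hl0, Real.rpow_zero, mul_one]; exact hwr2⟩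
        have hcont : ContinuousAt (fun q : ℂ × ℂ => φ2 q.1 q.2) (0, p.2) := by
          have h5 := (hdiff.differentiableAt (hUopen.mem_nhds hm0)).continuousAt
          exact (continuous_snd.continuousAt).comp h5
        have hx : Tendsto (fun n : ℕ => ((r/2 * (1/((n:ℝ)+1)) : ℝ):ℂ)) atTop (nhds 0) := by
          have h6 : Tendsto (fun n : ℕ => r/2 * (1/((n:ℝ)+1))) atTop (nhds 0) := by
            have h7 := tendsto_one_div_add_atTop_nhds_zero_nat.const_mul (r/2)
            simpa using h7
          have h8 : Tendsto (fun n : ℕ => ((r/2 * (1/((n:ℝ)+1)) : ℝ):ℂ)) atTop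
              (nhds (((0:ℝ):ℂ))) := (Complex.continuous_ofReal.tendsto 0).comp h6
          rwa [Complex.ofReal_zero] at h8
        have hseq : Tendsto (fun n : ℕ => (((r/2 * (1/((n:ℝ)+1)) : ℝ):ℂ), p.2)) atTop
            (nhds ((0:ℂ), p.2)) := hx.prodMk_nhds tendsto_const_nhds
        have h9 : Tendsto (fun n : ℕ => φ2 (((r/2 * (1/((n:ℝ)+1)) : ℝ):ℂ)) p.2) atTop
            (nhds (φ2 0 p.2)) := hcont.tendsto.comp hseq
        have h10 : ∀ n : ℕ, φ2 (((r/2 * (1/((n:ℝ)+1)) : ℝ):ℂ)) p.2 = c2 * p.2 := by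
          intro n
          have hxpos : (0:ℝ) < r/2 * (1/((n:ℝ)+1)) := by positivity
          have hxlt : r/2 * (1/((n:ℝ)+1)) < r := by
            have h11 : 1/((n:ℝ)+1) ≤ 1 := by
              rw [div_le_one (by positivity)]
              simp
            nlinarith
          have hxn : ‖(((r/2 * (1/((n:ℝ)+1)) : ℝ):ℂ))‖ = r/2 * (1/((n:ℝ)+1)) :=
            aux_norm_ofReal _ hxpos.le
          apply hφ2c
          · rw [hUm]
            refine ⟨by rw [hxn]; exact hxlt, ?_⟩
            show ‖p.2‖ < r * ‖(((r/2 * (1/((n:ℝ)+1)) : ℝ):ℂ))‖ ^ l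
            rw [← hl0, Real.rpow_zero, mul_one]
            exact hwr2
          · exact norm_pos_iff.mp (by rw [hxn]; exact hxpos)
        have h12 : Tendsto (fun _ : ℕ => c2 * p.2) atTop (nhds (φ2 0 p.2)) := by
          rw [← funext h10]
          exact h9
        exact (tendsto_nhds_unique h12 tendsto_const_nhds)
      rw [h0]
      exact ⟨by rw [hφ10, mul_zero], hφ20⟩
    · -- l > 0 : impossible
      exfalso
      rw [h0, norm_zero, Real.zero_rpow hl0.ne', mul_zero] at hp2
      exact absurd hp2 (norm_nonneg _).not_gt
  · have h1 : 0 < ‖p.1‖ := norm_pos_iff.mpr h0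
    exact ⟨hφ1c p.1 h1 hp1, hφ2c p.1 p.2 hp h0⟩
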